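/- Upper-bound soundness of the PoQoEA construction reduces to VPKE soundness: suppose each revealed pair (i, aᵢ) in the proof π satisfies aᵢ = Dec_k(cᵢ) (guaranteed by VPKE soundness) and aᵢ ≠ sᵢ, and the verifier accepts with claimed quality χ. Then χ ≥ Quality(Dec_k(c); G, G_s); i.e., the claimed quality is an upper bound of the true quality. -/

import Mathlib

/-- Upper-bound soundness of PoQoEA: if every revealed pair in the proof π
is a correctly decrypted answer disagreeing with the gold standard (with
distinct indices in G), and the verifier accepts with claimed quality
χ = |G| − |π|, then χ is an upper bound of the true quality. -/
theorem poqoea_upper_bound_soundness {ι α : Type*} [DecidableEq ι] [DecidableEq α]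
    (G : Finset ι) (s dec : ι → α) (π : Finset (ι × α))
    (hdistinct : (π.image Prod.fst).card = π.card)
    (hmem : ∀ q ∈ π, q.1 ∈ G ∧ q.2 = dec q.1 ∧ q.2 ≠ s q.1)
    (χ : ℕ) (hχ : χ = G.card - π.card) :
    (∑ i ∈ G, if dec i = s i then (1 : ℕ) else 0) ≤ χ := by
  subst hχ
  have hsub : π.image Prod.fst ⊆ G.filter (fun i => ¬ dec i = s i) := by
    intro i hi
    simp only [Finset.mem_image] at hi
    obtain ⟨q, hq, rfl⟩ := hi
    obtain ⟨h1, h2, h3⟩ := hmem q hq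
    exact Finset.mem_filter.mpr ⟨h1, h2 ▸ h3⟩
  have hle : π.card ≤ (G.filter (fun i => ¬ dec i = s i)).card :=
    hdistinct ▸ Finset.card_le_card hsub
  have hsum : (∑ i ∈ G, if dec i = s i then (1 : ℕ) else 0)
      = (G.filter (fun i => dec i = s i)).card := by
    rw [Finset.card_filter]
  have hsplit := Finset.card_filter_add_card_filter_not
    (s := G) (p := fun i => dec i = s i)
  rw [hsum]
  omega
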